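/- For all n ≥ 1, f(n) ≤ n·√(n-1)/2, where f(n) is the maximum number of edges among n-vertex graphs with no 3-cycles and no 4-cycles. -/

import Mathlib

open Finset

open scoped Classical

noncomputable def edgeCount {V : Type} [Fintype V] (G : SimpleGraph V) : ℕ :=
  G.edgeFinset.card

noncomputable def triCount {V : Type} [Fintype V] [DecidableEq V] (G : SimpleGraph V) : ℕ :=
  (G.cliqueFinset 3).card

noncomputable def sqCount {V : Type} [Fintype V] [DecidableEq V] (G : SimpleGraph V) : ℕ :=
  ((univ : Finset (V × V × V × V)).filter fun p =>
    p.1 ≠ p.2.1 ∧ p.1 ≠ p.2.2.1 ∧ p.1 ≠ p.2.2.2 ∧ p.2.1 ≠ p.2.2.1 ∧ p.2.1 ≠ p.2.2.2 ∧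
      p.2.2.1 ≠ p.2.2.2 ∧ G.Adj p.1 p.2.1 ∧ G.Adj p.2.1 p.2.2.1 ∧ G.Adj p.2.2.1 p.2.2.2 ∧
      G.Adj p.2.2.2 p.1).card / 8

noncomputable def score {V : Type} [Fintype V] [DecidableEq V] (G : SimpleGraph V) : ℤ :=
  (edgeCount G : ℤ) - (triCount G : ℤ) - (sqCount G : ℤ)

def noC3 {V : Type} (G : SimpleGraph V) : Prop := G.CliqueFree 3

def noC4 {V : Type} (G : SimpleGraph V) : Prop :=
  ∀ a b c d : V, a ≠ b → a ≠ c → a ≠ d → b ≠ c → b ≠ d → c ≠ d →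
    G.Adj a b → G.Adj b c → G.Adj c d → ¬ G.Adj d a

noncomputable def extremalNum (n : ℕ) : ℕ :=
  ((univ : Finset (SimpleGraph (Fin n))).filter fun G => noC3 G ∧ noC4 G).sup edgeCount

noncomputable def gflip {V : Type} [DecidableEq V] (G : SimpleGraph V) (u v : V) : SimpleGraph V :=
  SimpleGraph.fromEdgeSet (symmDiff G.edgeSet {s(u, v)})

lemma key_bound {n : ℕ} (G : SimpleGraph (Fin n)) (h3 : noC3 G) (h4 : noC4 G) :
    ∑ v : Fin n, G.degree v * G.degree v ≤ n * n - n := by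
  classical
  set A : Finset (Fin n × Fin n) := univ.filter fun p => G.Adj p.1 p.2 with hAdef
  set T : Finset (Fin n × Fin n) :=
    (univ : Finset (Fin n)).offDiag.filter (fun p => ¬ G.Adj p.1 p.2) with hTdef
  have hA : A.card = ∑ v : Fin n, G.degree v := by
    rw [SimpleGraph.sum_degrees_eq_twice_card_edges,
      ← SimpleGraph.dart_card_eq_twice_card_edges, ← Finset.card_univ (α := G.Dart)]
    refine Finset.card_bij (fun p hp => SimpleGraph.Dart.mk p (Finset.mem_filter.mp hp).2)
      (fun a ha => Finset.mem_univ _) ?_ ?_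
    · intro a ha b hb hab
      exact congrArg SimpleGraph.Dart.toProd hab
    · intro d _
      exact ⟨d.toProd, Finset.mem_filter.mpr ⟨Finset.mem_univ _, d.adj⟩, rfl⟩
  set S : Finset (Σ _ : Fin n, Fin n × Fin n) :=
    univ.sigma (fun v => (G.neighborFinset v).offDiag) with hSdef
  have hS : S.card = ∑ v : Fin n, (G.degree v * G.degree v - G.degree v) := by
    rw [hSdef, Finset.card_sigma]
    refine Finset.sum_congr rfl fun v _ => ?_
    rw [Finset.offDiag_card, SimpleGraph.card_neighborFinset_eq_degree]
  have hST : S.card ≤ T.card := by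
    refine Finset.card_le_card_of_injOn (fun t => t.2) ?_ ?_
    · rintro ⟨v, x, y⟩ ht
      rw [hSdef, Finset.mem_coe, Finset.mem_sigma] at ht
      obtain ⟨-, ht⟩ := ht
      rw [Finset.mem_offDiag] at ht
      obtain ⟨hx, hy, hxy⟩ := ht
      rw [SimpleGraph.mem_neighborFinset] at hx hy
      rw [hTdef, Finset.mem_coe, Finset.mem_filter, Finset.mem_offDiag]
      refine ⟨⟨Finset.mem_univ _, Finset.mem_univ _, hxy⟩, fun hadj => ?_⟩
      exact h3 _ (SimpleGraph.is3Clique_triple_iff.mpr ⟨hx, hy, hadj⟩)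
    · rintro ⟨v, x, y⟩ hv ⟨w, x', y'⟩ hw heq
      simp only [hSdef, Finset.coe_sigma, Set.mem_sigma_iff, Finset.mem_coe,
        Finset.mem_offDiag, SimpleGraph.mem_neighborFinset] at hv hw
      obtain ⟨-, hvx, hvy, hxy⟩ := hv
      obtain ⟨-, hwx, hwy, hxy'⟩ := hw
      obtain ⟨rfl, rfl⟩ := Prod.mk.inj heq
      obtain rfl : v = w := by
        by_contra hvw
        exact h4 x v y w (G.ne_of_adj hvx).symm hxy (G.ne_of_adj hwx).symm
          (G.ne_of_adj hvy) hvw (G.ne_of_adj hwy).symm hvx.symm hvy hwy.symm hwx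
      rfl
  have hpart : A.card + T.card = n * n - n := by
    have h1 : (univ : Finset (Fin n)).offDiag.filter (fun p => G.Adj p.1 p.2) = A := by
      ext p
      simp only [hAdef, Finset.mem_filter, Finset.mem_offDiag, Finset.mem_univ, true_and]
      exact ⟨fun h => h.2, fun h => ⟨G.ne_of_adj h, h⟩⟩
    have := Finset.card_filter_add_card_filter_not
      (s := (univ : Finset (Fin n)).offDiag) (p := fun p => G.Adj p.1 p.2)
    rw [h1] at this
    rw [← hTdef] at this
    rw [this, Finset.offDiag_card, Finset.card_univ, Fintype.card_fin]
  calc ∑ v : Fin n, G.degree v * G.degree v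
      = ∑ v : Fin n, ((G.degree v * G.degree v - G.degree v) + G.degree v) := by
        refine Finset.sum_congr rfl fun v _ => ?_
        have : G.degree v ≤ G.degree v * G.degree v := by nlinarith [Nat.zero_le (G.degree v)]
        omega
    _ = S.card + A.card := by rw [Finset.sum_add_distrib, hS, hA]
    _ ≤ T.card + A.card := by omega
    _ = n * n - n := by omega

lemma stmt7_aux (n : ℕ) (hn : 1 ≤ n)
    (G : SimpleGraph (Fin n)) (h3 : noC3 G) (h4 : noC4 G) :
    (edgeCount G : ℝ) ≤ n * Real.sqrt ((n : ℝ) - 1) / 2 := by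
  classical
  have key := key_bound G h3 h4
  have hdeg : ∑ v : Fin n, G.degree v = 2 * edgeCount G :=
    SimpleGraph.sum_degrees_eq_twice_card_edges G
  have hcs : ((2 * edgeCount G : ℕ) : ℝ) ^ 2 ≤ (n : ℝ) * ((n * n - n : ℕ) : ℝ) := by
    have h1 : ((∑ v : Fin n, (G.degree v : ℝ)) ^ 2 : ℝ) ≤
        (n : ℝ) * ∑ v : Fin n, (G.degree v : ℝ) ^ 2 := by
      simpa using sq_sum_le_card_mul_sum_sq (s := (univ : Finset (Fin n)))
        (f := fun v => (G.degree v : ℝ))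
    have h2 : (∑ v : Fin n, (G.degree v : ℝ)) = ((2 * edgeCount G : ℕ) : ℝ) := by
      rw [← hdeg]; push_cast; ring
    have h3' : (∑ v : Fin n, (G.degree v : ℝ) ^ 2) = ((∑ v : Fin n, G.degree v * G.degree v : ℕ) : ℝ) := by
      push_cast; exact Finset.sum_congr rfl fun v _ => sq (G.degree v : ℝ) ▸ (by ring)
    rw [h2, h3'] at h1
    refine h1.trans (mul_le_mul_of_nonneg_left ?_ (by positivity))
    exact_mod_cast key
  have hsub : ((n * n - n : ℕ) : ℝ) = (n : ℝ) * (n : ℝ) - n := by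
    have : n ≤ n * n := Nat.le_mul_of_pos_left n hn
    push_cast [Nat.cast_sub this]; ring
  have hn1 : (0 : ℝ) ≤ (n : ℝ) - 1 := by
    have : (1 : ℝ) ≤ n := by exact_mod_cast hn
    linarith
  have hmain : (2 * (edgeCount G : ℝ)) ≤ (n : ℝ) * Real.sqrt ((n : ℝ) - 1) := by
    have hsq : (2 * (edgeCount G : ℝ)) ^ 2 ≤ ((n : ℝ) ^ 2) * ((n : ℝ) - 1) := by
      rw [hsub] at hcs
      push_cast at hcs
      nlinarith [hcs]
    have := (Real.le_sqrt (by positivity) (by positivity)).mpr hsq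
    rwa [Real.sqrt_mul (by positivity) _, Real.sqrt_sq (by positivity)] at this
  linarith

theorem stmt_7 (n : ℕ) (hn : 1 ≤ n) :
    (extremalNum n : ℝ) ≤ n * Real.sqrt ((n : ℝ) - 1) / 2 := by
  classical
  set s := ((univ : Finset (SimpleGraph (Fin n))).filter fun G => noC3 G ∧ noC4 G) with hs
  have hne : s.Nonempty := by
    refine ⟨⊥, Finset.mem_filter.mpr ⟨Finset.mem_univ _, ?_, ?_⟩⟩
    · exact SimpleGraph.cliqueFree_bot (by norm_num)
    · intro a b c d _ _ _ _ _ _ hab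
      exact absurd hab (by simp)
  obtain ⟨G, hG, hsup⟩ := Finset.exists_mem_eq_sup s hne edgeCount
  obtain ⟨h3, h4⟩ := (Finset.mem_filter.mp hG).2
  rw [extremalNum, ← hs, hsup]
  exact stmt7_aux n hn G h3 h4
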